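/- Let p be a prime, m a positive integer, and ℓ an integer with p ∤ ℓ. Set α = 1 + p^m·ℓ and suppose ℓ' ≡ ℓ (mod p^m), i.e. α' = 1 + p^m·ℓ' satisfies α' ≡ α (mod p^{2m}). Then there exists a positive integer f with f ≡ 1 (mod p^m) such that α' ≡ α^f (mod p^{3m}), provided p is odd. -/

import Mathlib

lemma aux_pow_congr (x : ℤ) (n : ℕ) :
    (1 + x)^n ≡ 1 + n * x + (n.choose 2) * x^2 [ZMOD x^3] := by
  induction n with
  | zero => simp
  | succ n ih =>
    have h1 : (1 + x)^(n+1) = (1 + x)^n * (1 + x) := pow_succ _ _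
    have h2 := ih.mul_right (1 + x)
    rw [h1]
    refine h2.trans ?_
    have hc : ((n+1).choose 2 : ℤ) = n.choose 2 + n := by
      rw [Nat.choose_succ_succ, Nat.choose_one_right]; push_cast; ring
    have : (1 + ↑n * x + ↑(n.choose 2) * x ^ 2) * (1 + x)
        - (1 + ↑(n + 1) * x + ↑((n+1).choose 2) * x ^ 2) = (n.choose 2) * x^3 := by
      rw [hc]; push_cast; ring
    exact (Int.modEq_iff_dvd.mpr (by rw [this]; exact dvd_mul_left _ _)).symm

/-- Let `p` be an odd prime, `m ≥ 1`, `ℓ, ℓ'` integers coprime to `p` with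
`ℓ' ≡ ℓ (mod p^m)`. Then there is a positive integer `f ≡ 1 (mod p^m)` with
`1 + p^m·ℓ' ≡ (1 + p^m·ℓ)^f (mod p^(3m))`. -/
theorem stmt_1 (p m : ℕ) (hp : p.Prime) (hodd : Odd p) (hm : 1 ≤ m)
    (ℓ ℓ' : ℤ) (hℓ : ¬ (p : ℤ) ∣ ℓ) (hℓ' : ¬ (p : ℤ) ∣ ℓ')
    (hcong : ℓ' ≡ ℓ [ZMOD (p : ℤ) ^ m]) :
    ∃ f : ℕ, 0 < f ∧ f ≡ 1 [MOD p ^ m] ∧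
      (1 + (p : ℤ) ^ m * ℓ') ≡ (1 + (p : ℤ) ^ m * ℓ) ^ f [ZMOD (p : ℤ) ^ (3 * m)] := by
  set q : ℤ := (p : ℤ) ^ m with hq
  have hq0 : q ≠ 0 := pow_ne_zero _ (by exact_mod_cast hp.pos.ne')
  -- t with ℓ' = ℓ - q * t
  obtain ⟨t, ht⟩ : q ∣ ℓ - ℓ' := hcong.dvd
  -- an inverse of ℓ mod q
  have hcop : IsCoprime q ℓ :=
    IsCoprime.pow_left (((Nat.prime_iff_prime_int.mp hp).coprime_iff_not_dvd).mpr hℓ)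
  obtain ⟨u, v, huv⟩ := hcop
  -- choose k ≡ -t * v mod q, k ≥ 0
  set k0 : ℤ := -t * v with hk0
  set kn : ℕ := (k0 % q).toNat with hkn
  have hknz : (kn : ℤ) = k0 % q := Int.toNat_of_nonneg (Int.emod_nonneg _ hq0)
  have hkk0 : (kn : ℤ) ≡ k0 [ZMOD q] := by
    rw [hknz]; exact Int.emod_emod_of_dvd _ dvd_rfl
  -- f
  refine ⟨1 + kn * p ^ m, by omega, ?_, ?_⟩
  · show (1 + kn * p ^ m) % p ^ m = 1 % p ^ m
    simp [Nat.add_mul_mod_self_right]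
  set f : ℕ := 1 + kn * p ^ m with hf
  have hfz : (f : ℤ) = 1 + kn * q := by push_cast [hf, hq]; ring
  -- key divisibility: q ∣ choose f 2
  have hdvd2 : 2 ∣ f * (f - 1) := by
    rcases Nat.even_or_odd f with h | h
    · exact Dvd.dvd.mul_right h.two_dvd _
    · exact Dvd.dvd.mul_left (Nat.Odd.sub_odd h odd_one).two_dvd _
  have hchoose2 : f.choose 2 * 2 = f * (f - 1) := by
    rw [Nat.choose_two_right, Nat.div_mul_cancel hdvd2]
  have hpmf : p ^ m ∣ f * (f - 1) := by
    have : f - 1 = kn * p ^ m := by simp [hf]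
    rw [this]; exact Dvd.dvd.mul_left (dvd_mul_left _ _) _
  have hqc : p ^ m ∣ f.choose 2 := by
    have hnd2 : ¬ p ∣ 2 := by
      have hpo := Nat.odd_iff.mp hodd
      intro h
      have h1 := Nat.le_of_dvd two_pos h
      have h2 := hp.two_le
      omega
    have hcop2 : Nat.Coprime (p ^ m) 2 :=
      Nat.Coprime.pow_left _ ((hp.coprime_iff_not_dvd).mpr hnd2)
    exact hcop2.dvd_of_dvd_mul_right (hchoose2 ▸ hpmf)
  obtain ⟨c2, hc2⟩ := hqc
  -- q ∣ kn * ℓ - (-t)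
  have hkl : q ∣ (kn : ℤ) * ℓ + t := by
    have h1 : (kn : ℤ) * ℓ ≡ k0 * ℓ [ZMOD q] := hkk0.mul_right ℓ
    have h2 : k0 * ℓ ≡ -t [ZMOD q] := by
      have : k0 * ℓ - (-t) = -t * (v * ℓ - 1) := by rw [hk0]; ring
      have hd : q ∣ k0 * ℓ - (-t) := by
        rw [this]
        exact Dvd.dvd.mul_left ⟨-u, by linarith [huv]⟩ _
      exact Int.modEq_iff_dvd.mpr (by have hd' := dvd_neg.mpr hd; rwa [neg_sub] at hd')
    have := h1.trans h2
    simpa [sub_neg_eq_add] using (Int.ModEq.dvd this.symm)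
  obtain ⟨s, hs⟩ := hkl
  -- main congruence
  have hx3 : (p : ℤ) ^ (3 * m) ∣ (q * ℓ) ^ 3 := by
    refine ⟨ℓ ^ 3, ?_⟩
    rw [hq, mul_pow, ← pow_mul, Nat.mul_comm]
  have hmain := (aux_pow_congr (q * ℓ) f).of_dvd hx3
  refine (Int.ModEq.symm ?_).trans hmain.symm
  -- show 1 + f*(qℓ) + choose * (qℓ)^2 ≡ 1 + q * ℓ'  mod p^(3m)
  rw [Int.modEq_iff_dvd]
  have hℓ'eq : ℓ' = ℓ - q * t := by linarith [ht]
  have : 1 + q * ℓ' - (1 + (f : ℤ) * (q * ℓ) + (f.choose 2 : ℤ) * (q * ℓ)^2)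
      = (p : ℤ) ^ (3 * m) * (-(s + c2 * ℓ ^ 2)) := by
    have hc2' : (f.choose 2 : ℤ) = q * c2 := by rw [hc2]; push_cast [hq]; ring
    have h3m : (p : ℤ) ^ (3 * m) = q * q * q := by
      rw [hq, ← pow_add, ← pow_add]; ring_nf
    rw [hℓ'eq, hfz, hc2', h3m]
    have hts : (t : ℤ) = q * s - kn * ℓ := by linarith [hs]
    rw [hts]; ring
  exact ⟨-(s + c2 * ℓ ^ 2), this⟩
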